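/- arXiv:2508.14169 — 3 statements merged into one kernel-verified Lean document; each statement's English description precedes it below -/
import Mathlib

section
/- Let n > m > ℓ ≥ 2 be integers, and let G and H be the groups given by the presentations G = ⟨x, y, z | x^(2^n) = 1, y^(2^m) = 1, z^(2^ℓ) = 1, [y,x] = z, [z,x] = z^(-2), [z,y] = z^(-2)⟩ and H = ⟨a, b, c | a^(2^n) = 1, b^(2^m) = a^(2^m), c^(2^ℓ) = 1, [b,a] = c, [c,a] = c^(-2), [c,b] = c^(-2)⟩. Then the complex group algebras ℂG and ℂH are isomorphic as ℂ-algebras. -/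
/-- Relators of the group `G` from the paper:
`G = ⟨x,y,z ∣ x^(2^n) = y^(2^m) = z^(2^l) = 1, [y,x] = z, [z,x] = z⁻², [z,y] = z⁻²⟩`,
where `[g,h] = g⁻¹h⁻¹gh`.  Generators: `0 ↦ x`, `1 ↦ y`, `2 ↦ z`. -/
def grels (n m l : ℕ) : Set (FreeGroup (Fin 3)) :=
  {FreeGroup.of 0 ^ 2 ^ n, FreeGroup.of 1 ^ 2 ^ m, FreeGroup.of 2 ^ 2 ^ l,
   (FreeGroup.of 1)⁻¹ * (FreeGroup.of 0)⁻¹ * FreeGroup.of 1 * FreeGroup.of 0 * (FreeGroup.of 2)⁻¹,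
   (FreeGroup.of 2)⁻¹ * (FreeGroup.of 0)⁻¹ * FreeGroup.of 2 * FreeGroup.of 0 * FreeGroup.of 2 ^ 2,
   (FreeGroup.of 2)⁻¹ * (FreeGroup.of 1)⁻¹ * FreeGroup.of 2 * FreeGroup.of 1 * FreeGroup.of 2 ^ 2}

/-- Relators of the group `H` from the paper:
`H = ⟨a,b,c ∣ a^(2^n) = 1, b^(2^m) = a^(2^m), c^(2^l) = 1, [b,a] = c, [c,a] = c⁻², [c,b] = c⁻²⟩`.
Generators: `0 ↦ a`, `1 ↦ b`, `2 ↦ c`. -/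
def hrels (n m l : ℕ) : Set (FreeGroup (Fin 3)) :=
  {FreeGroup.of 0 ^ 2 ^ n, FreeGroup.of 1 ^ 2 ^ m * (FreeGroup.of 0 ^ 2 ^ m)⁻¹,
   FreeGroup.of 2 ^ 2 ^ l,
   (FreeGroup.of 1)⁻¹ * (FreeGroup.of 0)⁻¹ * FreeGroup.of 1 * FreeGroup.of 0 * (FreeGroup.of 2)⁻¹,
   (FreeGroup.of 2)⁻¹ * (FreeGroup.of 0)⁻¹ * FreeGroup.of 2 * FreeGroup.of 0 * FreeGroup.of 2 ^ 2,
   (FreeGroup.of 2)⁻¹ * (FreeGroup.of 1)⁻¹ * FreeGroup.of 2 * FreeGroup.of 1 * FreeGroup.of 2 ^ 2}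

/-- The group `G` of the paper. -/
def GrpG (n m l : ℕ) : Type := PresentedGroup (grels n m l)
/-- The group `H` of the paper. -/
def GrpH (n m l : ℕ) : Type := PresentedGroup (hrels n m l)

instance (n m l : ℕ) : Group (GrpG n m l) := by unfold GrpG; infer_instance
instance (n m l : ℕ) : Group (GrpH n m l) := by unfold GrpH; infer_instance

noncomputable section RootSec
open Finset Complex

variable {A : Type*} [Ring A] [Algebra ℂ A]

def zet (N : ℕ) : ℂ := Complex.exp (2 * Real.pi * Complex.I / N)
def omg (M N : ℕ) (j : ℕ) : ℂ := Complex.exp (2 * Real.pi * Complex.I * j / (M * N))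

lemma zet_prim {N : ℕ} (hN : N ≠ 0) : IsPrimitiveRoot (zet N) N :=
  Complex.isPrimitiveRoot_exp N hN

lemma zet_pow_N {N : ℕ} (hN : N ≠ 0) : (zet N) ^ N = 1 := (zet_prim hN).pow_eq_one

lemma zet_ne_zero {N : ℕ} (hN : N ≠ 0) : zet N ≠ 0 := Complex.exp_ne_zero _

lemma omg_pow {M N : ℕ} (hM : M ≠ 0) (hN : N ≠ 0) (j : ℕ) :
    (omg M N j) ^ M = (zet N) ^ j := by
  rw [omg, zet, ← Complex.exp_nat_mul, ← Complex.exp_nat_mul]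
  congr 1
  have hM' : (M : ℂ) ≠ 0 := Nat.cast_ne_zero.2 hM
  have hN' : (N : ℂ) ≠ 0 := Nat.cast_ne_zero.2 hN
  field_simp

def idem (N : ℕ) (t : A) (j : ℕ) : A :=
  (N : ℂ)⁻¹ • ∑ k ∈ range N, ((zet N)⁻¹ ^ (j * k)) • t ^ k

lemma sum_pow_eq {N : ℕ} (hN : N ≠ 0) {x : ℂ} (hx : x ^ N = 1) :
    ∑ k ∈ range N, x ^ k = if x = 1 then (N : ℂ) else 0 := by
  split_ifs with h
  · simp [h]
  · rw [geom_sum_eq h, hx, sub_self, zero_div]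

lemma mul_idem {N : ℕ} (hN : N ≠ 0) {t : A} (ht : t ^ N = 1) (j : ℕ) :
    t * idem N t j = (zet N) ^ j • idem N t j := by
  have hzN : (zet N)⁻¹ ^ N = 1 := by
    rw [inv_pow, zet_pow_N hN, inv_one]
  set g : ℕ → A := fun k => ((zet N)⁻¹ ^ (j * k)) • t ^ k with hg
  have hgN : g N = g 0 := by
    simp only [hg]
    rw [mul_comm j N, pow_mul, hzN, one_pow, ht]
    simp
  have key : ∑ k ∈ range N, g (k + 1) = ∑ k ∈ range N, g k := by
    have h1 : ∑ k ∈ range (N + 1), g k = (∑ k ∈ range N, g (k + 1)) + g 0 :=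
      Finset.sum_range_succ' g N
    have h2 : ∑ k ∈ range (N + 1), g k = (∑ k ∈ range N, g k) + g N :=
      Finset.sum_range_succ g N
    rw [hgN] at h2
    have := h1.symm.trans h2
    exact add_right_cancel this
  have step : ∀ k, t * (((zet N)⁻¹ ^ (j * k)) • t ^ k) = (zet N) ^ j • g (k + 1) := by
    intro k
    simp only [hg]
    rw [smul_smul, mul_smul_comm, ← pow_succ']
    congr 1
    rw [mul_add, mul_one, pow_add]
    have h1 : zet N ^ j * (zet N)⁻¹ ^ j = 1 := by
      rw [← mul_pow, mul_inv_cancel₀ (zet_ne_zero hN), one_pow]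
    field_simp
    rw [one_div, mul_assoc, h1, mul_one]
  simp only [idem]
  rw [mul_smul_comm, smul_comm ((zet N) ^ j) ((N : ℂ)⁻¹)]
  congr 1
  rw [Finset.mul_sum, Finset.smul_sum]
  calc ∑ k ∈ range N, t * (((zet N)⁻¹ ^ (j * k)) • t ^ k)
      = ∑ k ∈ range N, (zet N) ^ j • g (k + 1) := by
        exact Finset.sum_congr rfl fun k _ => step k
    _ = (zet N) ^ j • ∑ k ∈ range N, g (k + 1) := by rw [Finset.smul_sum]
    _ = (zet N) ^ j • ∑ k ∈ range N, g k := by rw [key]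
    _ = ∑ k ∈ range N, (zet N) ^ j • g k := by rw [Finset.smul_sum]

lemma pow_mul_idem {N : ℕ} (hN : N ≠ 0) {t : A} (ht : t ^ N = 1) (j : ℕ) (p : ℕ) :
    t ^ p * idem N t j = ((zet N) ^ j) ^ p • idem N t j := by
  induction p with
  | zero => simp
  | succ p ih =>
    rw [pow_succ, mul_assoc, mul_idem hN ht, mul_smul_comm, ih, smul_smul, pow_succ, mul_comm]

lemma idem_mul_idem {N : ℕ} (hN : N ≠ 0) {t : A} (ht : t ^ N = 1) {i j : ℕ}
    (hi : i < N) (hj : j < N) :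
    idem N t i * idem N t j = if i = j then idem N t j else 0 := by
  have expand : idem N t i * idem N t j
      = ((N : ℂ)⁻¹ * ∑ k ∈ range N, ((zet N)⁻¹ ^ i * (zet N) ^ j) ^ k) • idem N t j := by
    rw [idem, smul_mul_assoc, Finset.sum_mul, mul_smul]
    congr 1
    rw [Finset.sum_smul]
    refine Finset.sum_congr rfl fun k _ => ?_
    rw [smul_mul_assoc, pow_mul_idem hN ht, smul_smul, mul_pow, ← pow_mul, ← pow_mul,
      mul_comm j k]
  rw [expand]
  by_cases h : i = j
  · subst h
    have : (zet N)⁻¹ ^ i * (zet N) ^ i = 1 := by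
      rw [← mul_pow, inv_mul_cancel₀ (zet_ne_zero hN), one_pow]
    rw [this]
    simp [Finset.sum_const, hN]
  · have hx : ((zet N)⁻¹ ^ i * (zet N) ^ j) ^ N = 1 := by
      rw [mul_pow, ← pow_mul, ← pow_mul, mul_comm i N, mul_comm j N, pow_mul, pow_mul,
        inv_pow, zet_pow_N hN, inv_one, one_pow, one_pow, one_mul]
    have hx1 : (zet N)⁻¹ ^ i * (zet N) ^ j ≠ 1 := by
      intro hc
      apply h
      rw [inv_pow, inv_mul_eq_one₀ (pow_ne_zero _ (zet_ne_zero hN))] at hc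
      exact ((zet_prim hN).pow_inj hj hi hc.symm).symm
    rw [sum_pow_eq hN hx, if_neg hx1]
    simp [h]

lemma sum_idem {N : ℕ} (hN : N ≠ 0) {t : A} (ht : t ^ N = 1) :
    ∑ j ∈ range N, idem N t j = 1 := by
  have swap : ∑ j ∈ range N, idem N t j
      = (N : ℂ)⁻¹ • ∑ k ∈ range N, (∑ j ∈ range N, ((zet N)⁻¹ ^ k) ^ j) • t ^ k := by
    simp only [idem]
    rw [← Finset.smul_sum, Finset.sum_comm]
    congr 1
    refine Finset.sum_congr rfl fun k _ => ?_
    rw [Finset.sum_smul]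
    refine Finset.sum_congr rfl fun j _ => ?_
    rw [← pow_mul, mul_comm k j]
  rw [swap]
  have inner : ∀ k ∈ range N, (∑ j ∈ range N, ((zet N)⁻¹ ^ k) ^ j) • t ^ k
      = (if k = 0 then (N : ℂ) else 0) • t ^ k := by
    intro k hk
    congr 1
    have hxN : ((zet N)⁻¹ ^ k) ^ N = 1 := by
      rw [← pow_mul, mul_comm k N, pow_mul, inv_pow, zet_pow_N hN, inv_one, one_pow]
    rw [sum_pow_eq hN hxN]
    congr 1
    simp only [eq_iff_iff]
    constructor
    · intro hc
      rw [inv_pow, inv_eq_one] at hc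
      exact (zet_prim hN).pow_inj (Finset.mem_range.1 hk) (Nat.pos_of_ne_zero hN)
        (by simpa using hc)
    · intro hc; subst hc; simp
  rw [Finset.sum_congr rfl inner,
    Finset.sum_eq_single 0 (fun b _ hb => by simp [hb])
      (fun h => absurd (Finset.mem_range.2 (Nat.pos_of_ne_zero hN)) h)]
  simp [smul_smul, inv_mul_cancel₀ (Nat.cast_ne_zero.2 hN : (N : ℂ) ≠ 0)]

def sroot (M N : ℕ) (t : A) : A := ∑ j ∈ range N, omg M N j • idem N t j

lemma sroot_pow {M N : ℕ} (hN : N ≠ 0) {t : A} (ht : t ^ N = 1) (p : ℕ) :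
    (sroot M N t) ^ p = ∑ j ∈ range N, (omg M N j) ^ p • idem N t j := by
  induction p with
  | zero => simp [sum_idem hN ht]
  | succ p ih =>
    rw [pow_succ, ih, sroot, Finset.sum_mul_sum]
    have : ∀ j ∈ range N, ∀ i ∈ range N,
        ((omg M N j) ^ p • idem N t j) * (omg M N i • idem N t i)
          = if j = i then ((omg M N j) ^ (p + 1)) • idem N t j else 0 := by
      intro j hj i hi
      rw [smul_mul_assoc, mul_smul_comm, idem_mul_idem hN ht (Finset.mem_range.1 hj)
        (Finset.mem_range.1 hi), smul_smul]
      split_ifs with h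
      · subst h; rw [pow_succ, mul_comm ((omg M N j) ^ p)]
      · simp
    calc ∑ j ∈ range N, ∑ i ∈ range N,
          ((omg M N j) ^ p • idem N t j) * (omg M N i • idem N t i)
        = ∑ j ∈ range N, ∑ i ∈ range N,
            (if j = i then ((omg M N j) ^ (p + 1)) • idem N t j else 0) := by
          refine Finset.sum_congr rfl fun j hj => Finset.sum_congr rfl fun i hi => this j hj i hi
      _ = ∑ j ∈ range N, (omg M N j) ^ (p + 1) • idem N t j := by
          refine Finset.sum_congr rfl fun j hj => ?_
          rw [Finset.sum_ite_eq (range N) j fun _ => (omg M N j) ^ (p + 1) • idem N t j]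
          simp [hj]

lemma sroot_pow_M {M N : ℕ} (hM : M ≠ 0) (hN : N ≠ 0) {t : A} (ht : t ^ N = 1) :
    (sroot M N t) ^ M = t := by
  rw [sroot_pow hN ht]
  have : ∀ j ∈ range N, (omg M N j) ^ M • idem N t j = t * idem N t j := by
    intro j _
    rw [omg_pow hM hN, mul_idem hN ht]
  rw [Finset.sum_congr rfl this, ← Finset.mul_sum, sum_idem hN ht, mul_one]

lemma map_idem {B : Type*} [Ring B] [Algebra ℂ B] (φ : A →ₐ[ℂ] B) (N : ℕ) (t : A) (j : ℕ) :
    φ (idem N t j) = idem N (φ t) j := by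
  simp [idem, map_smul, map_sum, map_pow]

lemma map_sroot {B : Type*} [Ring B] [Algebra ℂ B] (φ : A →ₐ[ℂ] B) (M N : ℕ) (t : A) :
    φ (sroot M N t) = sroot M N (φ t) := by
  simp [sroot, map_smul, map_sum, map_idem]

lemma commute_idem {N : ℕ} {t x : A} (h : Commute x t) (j : ℕ) :
    Commute x (idem N t j) :=
  ((Commute.sum_right _ _ _ fun k _ => (h.pow_right k).smul_right _).smul_right _ : _)

lemma commute_sroot {M N : ℕ} {t x : A} (h : Commute x t) :
    Commute x (sroot M N t) :=
  Commute.sum_right _ _ _ fun j _ => (commute_idem h j).smul_right _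

end RootSec

section GroupLemmas
variable {K : Type*} [Group K]

lemma commute_conj_cancel {a b z : K} (hza : Commute z a) (hzb : Commute z b) (d : K) :
    (b * z)⁻¹ * a⁻¹ * (b * z) * a * d = b⁻¹ * a⁻¹ * b * a * d := by
  have hW : Commute z (b⁻¹ * a⁻¹ * b * a) :=
    ((hzb.inv_right.mul_right hza.inv_right).mul_right hzb).mul_right hza
  calc (b * z)⁻¹ * a⁻¹ * (b * z) * a * d
      = (z⁻¹ * (b⁻¹ * a⁻¹ * b) * (z * a)) * d := by group
    _ = (z⁻¹ * (b⁻¹ * a⁻¹ * b) * (a * z)) * d := by rw [hza.eq]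
    _ = (z⁻¹ * ((b⁻¹ * a⁻¹ * b * a) * z)) * d := by group
    _ = (z⁻¹ * (z * (b⁻¹ * a⁻¹ * b * a))) * d := by rw [← hW.eq]
    _ = b⁻¹ * a⁻¹ * b * a * d := by group

lemma commute_conj_cancel' {b c z : K} (hzb : Commute z b) (hzc : Commute z c) (d : K) :
    c⁻¹ * (b * z)⁻¹ * c * (b * z) * d = c⁻¹ * b⁻¹ * c * b * d := by
  have hW : Commute z (b⁻¹ * c * b) := (hzb.inv_right.mul_right hzc).mul_right hzb
  have : c⁻¹ * (b * z)⁻¹ * c * (b * z) = c⁻¹ * b⁻¹ * c * b := by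
    calc c⁻¹ * (b * z)⁻¹ * c * (b * z) = c⁻¹ * (z⁻¹ * ((b⁻¹ * c * b) * z)) := by group
      _ = c⁻¹ * (z⁻¹ * (z * (b⁻¹ * c * b))) := by rw [← hW.eq]
      _ = c⁻¹ * b⁻¹ * c * b := by group
  calc c⁻¹ * (b * z)⁻¹ * c * (b * z) * d
      = (c⁻¹ * (b * z)⁻¹ * c * (b * z)) * d := by group
    _ = (c⁻¹ * b⁻¹ * c * b) * d := by rw [this]
    _ = c⁻¹ * b⁻¹ * c * b * d := by group

lemma derived_rels {a b c : K}
    (e4 : b⁻¹ * a⁻¹ * b * a * c⁻¹ = 1)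
    (e5 : c⁻¹ * a⁻¹ * c * a * c ^ 2 = 1) :
    a⁻¹ * b * a = b * c ∧ a⁻¹ * c * a = c⁻¹ ∧ Commute (a ^ 2) b ∧ Commute (a ^ 2) c := by
  have hba : a⁻¹ * b * a = b * c := by
    calc a⁻¹ * b * a = b * (b⁻¹ * a⁻¹ * b * a * c⁻¹) * c := by group
      _ = b * c := by rw [e4]; group
  have hca : a⁻¹ * c * a = c⁻¹ := by
    calc a⁻¹ * c * a = c * (c⁻¹ * a⁻¹ * c * a * c ^ 2) * c⁻¹ * c⁻¹ := by group
      _ = c⁻¹ := by rw [e5]; group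
  have k1 : a⁻¹ * (a⁻¹ * b * a) * a = b := by
    rw [hba]
    calc a⁻¹ * (b * c) * a = (a⁻¹ * b * a) * (a⁻¹ * c * a) := by group
      _ = (b * c) * c⁻¹ := by rw [hba, hca]
      _ = b := by group
  have k2 : a⁻¹ * (a⁻¹ * c * a) * a = c := by
    rw [hca]
    calc a⁻¹ * c⁻¹ * a = (a⁻¹ * c * a)⁻¹ := by group
      _ = c := by rw [hca]; group
  refine ⟨hba, hca, ?_, ?_⟩
  · show a ^ 2 * b = b * a ^ 2
    calc a ^ 2 * b = a ^ 2 * (a⁻¹ * (a⁻¹ * b * a) * a) := by rw [k1]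
      _ = b * a ^ 2 := by rw [pow_two]; group
  · show a ^ 2 * c = c * a ^ 2
    calc a ^ 2 * c = a ^ 2 * (a⁻¹ * (a⁻¹ * c * a) * a) := by rw [k2]
      _ = c * a ^ 2 := by rw [pow_two]; group

lemma commute_pow2 {a x : K} (h : Commute (a ^ 2) x) {m : ℕ} (hm : 1 ≤ m) :
    Commute (a ^ 2 ^ m) x := by
  have h2 : (2 : ℕ) ^ m = 2 * 2 ^ (m - 1) := by
    rw [← pow_succ']; congr 1; omega
  rw [h2, pow_mul]; exact h.pow_left _

end GroupLemmas
namespace Paper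

lemma rel_one {α : Type*} {rels : Set (FreeGroup α)} {r : FreeGroup α} (h : r ∈ rels) :
    PresentedGroup.mk rels r = 1 :=
  (QuotientGroup.eq_one_iff _).2 (Subgroup.subset_normalClosure h)

@[simp] lemma mk_of {α : Type*} {rels : Set (FreeGroup α)} (i : α) :
    PresentedGroup.mk rels (FreeGroup.of i) = PresentedGroup.of i := rfl

variable (n m l : ℕ)

abbrev Gp := PresentedGroup (grels n m l)
abbrev Hp := PresentedGroup (hrels n m l)

section HpRels
local notation "a" => (PresentedGroup.of 0 : Hp n m l)
local notation "b" => (PresentedGroup.of 1 : Hp n m l)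
local notation "c" => (PresentedGroup.of 2 : Hp n m l)

lemma hp1 : a ^ 2 ^ n = 1 := by
  have := rel_one (show FreeGroup.of 0 ^ 2 ^ n ∈ hrels n m l from Set.mem_insert _ _)
  simpa [map_pow] using this

lemma hp2 : b ^ 2 ^ m = a ^ 2 ^ m := by
  have := rel_one (show FreeGroup.of 1 ^ 2 ^ m * (FreeGroup.of 0 ^ 2 ^ m)⁻¹ ∈ hrels n m l from
    Set.mem_insert_of_mem _ (Set.mem_insert _ _))
  simp only [map_mul, map_inv, map_pow, mk_of] at this
  exact mul_inv_eq_one.1 this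

lemma hp3 : c ^ 2 ^ l = 1 := by
  have := rel_one (show FreeGroup.of 2 ^ 2 ^ l ∈ hrels n m l from
    Set.mem_insert_of_mem _ (Set.mem_insert_of_mem _ (Set.mem_insert _ _)))
  simpa [map_pow] using this

lemma hp4 : b⁻¹ * a⁻¹ * b * a * c⁻¹ = 1 := by
  have := rel_one (show (FreeGroup.of 1)⁻¹ * (FreeGroup.of 0)⁻¹ * FreeGroup.of 1 * FreeGroup.of 0
      * (FreeGroup.of 2)⁻¹ ∈ hrels n m l from
    Set.mem_insert_of_mem _ (Set.mem_insert_of_mem _ (Set.mem_insert_of_mem _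
      (Set.mem_insert _ _))))
  simpa [map_mul, map_inv] using this

lemma hp5 : c⁻¹ * a⁻¹ * c * a * c ^ 2 = 1 := by
  have := rel_one (show (FreeGroup.of 2)⁻¹ * (FreeGroup.of 0)⁻¹ * FreeGroup.of 2 * FreeGroup.of 0
      * FreeGroup.of 2 ^ 2 ∈ hrels n m l from
    Set.mem_insert_of_mem _ (Set.mem_insert_of_mem _ (Set.mem_insert_of_mem _
      (Set.mem_insert_of_mem _ (Set.mem_insert _ _)))))
  simpa [map_mul, map_inv, map_pow] using this

lemma hp6 : c⁻¹ * b⁻¹ * c * b * c ^ 2 = 1 := by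
  have := rel_one (show (FreeGroup.of 2)⁻¹ * (FreeGroup.of 1)⁻¹ * FreeGroup.of 2 * FreeGroup.of 1
      * FreeGroup.of 2 ^ 2 ∈ hrels n m l from
    Set.mem_insert_of_mem _ (Set.mem_insert_of_mem _ (Set.mem_insert_of_mem _
      (Set.mem_insert_of_mem _ (Set.mem_insert_of_mem _ rfl)))))
  simpa [map_mul, map_inv, map_pow] using this

end HpRels

section GpRels
local notation "x" => (PresentedGroup.of 0 : Gp n m l)
local notation "y" => (PresentedGroup.of 1 : Gp n m l)
local notation "z" => (PresentedGroup.of 2 : Gp n m l)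

lemma gp1 : x ^ 2 ^ n = 1 := by
  have := rel_one (show FreeGroup.of 0 ^ 2 ^ n ∈ grels n m l from Set.mem_insert _ _)
  simpa [map_pow] using this

lemma gp2 : y ^ 2 ^ m = 1 := by
  have := rel_one (show FreeGroup.of 1 ^ 2 ^ m ∈ grels n m l from
    Set.mem_insert_of_mem _ (Set.mem_insert _ _))
  simpa [map_pow] using this

lemma gp3 : z ^ 2 ^ l = 1 := by
  have := rel_one (show FreeGroup.of 2 ^ 2 ^ l ∈ grels n m l from
    Set.mem_insert_of_mem _ (Set.mem_insert_of_mem _ (Set.mem_insert _ _)))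
  simpa [map_pow] using this

lemma gp4 : y⁻¹ * x⁻¹ * y * x * z⁻¹ = 1 := by
  have := rel_one (show (FreeGroup.of 1)⁻¹ * (FreeGroup.of 0)⁻¹ * FreeGroup.of 1 * FreeGroup.of 0
      * (FreeGroup.of 2)⁻¹ ∈ grels n m l from
    Set.mem_insert_of_mem _ (Set.mem_insert_of_mem _ (Set.mem_insert_of_mem _
      (Set.mem_insert _ _))))
  simpa [map_mul, map_inv] using this

lemma gp5 : z⁻¹ * x⁻¹ * z * x * z ^ 2 = 1 := by
  have := rel_one (show (FreeGroup.of 2)⁻¹ * (FreeGroup.of 0)⁻¹ * FreeGroup.of 2 * FreeGroup.of 0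
      * FreeGroup.of 2 ^ 2 ∈ grels n m l from
    Set.mem_insert_of_mem _ (Set.mem_insert_of_mem _ (Set.mem_insert_of_mem _
      (Set.mem_insert_of_mem _ (Set.mem_insert _ _)))))
  simpa [map_mul, map_inv, map_pow] using this

lemma gp6 : z⁻¹ * y⁻¹ * z * y * z ^ 2 = 1 := by
  have := rel_one (show (FreeGroup.of 2)⁻¹ * (FreeGroup.of 1)⁻¹ * FreeGroup.of 2 * FreeGroup.of 1
      * FreeGroup.of 2 ^ 2 ∈ grels n m l from
    Set.mem_insert_of_mem _ (Set.mem_insert_of_mem _ (Set.mem_insert_of_mem _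
      (Set.mem_insert_of_mem _ (Set.mem_insert_of_mem _ rfl)))))
  simpa [map_mul, map_inv, map_pow] using this

end GpRels

end Paper
namespace Paper
open MonoidAlgebra

noncomputable def unitOf (K : Type*) [Group K] : K →* (MonoidAlgebra ℂ K)ˣ :=
  (Units.map (MonoidAlgebra.of ℂ K)).comp (toUnits : K ≃* Kˣ).toMonoidHom

@[simp] lemma unitOf_val {K : Type*} [Group K] (g : K) :
    (unitOf K g : MonoidAlgebra ℂ K) = MonoidAlgebra.of ℂ K g := rfl

lemma units_commute {M : Type*} [Monoid M] {u v : Mˣ} (h : (u : M) * v = (v : M) * u) :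
    Commute u v :=
  Units.ext (by simpa using h)

lemma of_commute {K : Type*} [Group K] {g h : K} (hc : Commute g h) :
    Commute (MonoidAlgebra.of ℂ K g) (MonoidAlgebra.of ℂ K h) := by
  show _ * _ = _ * _
  rw [← map_mul, ← map_mul, hc.eq]

variable (n m l : ℕ)

abbrev AlgG := MonoidAlgebra ℂ (Gp n m l)
abbrev AlgH := MonoidAlgebra ℂ (Hp n m l)

/-- central element `a^(2^m)` of `ℂH` -/
noncomputable def tB : AlgH n m l :=
  MonoidAlgebra.of ℂ (Hp n m l) ((PresentedGroup.of 0 : Hp n m l) ^ 2 ^ m)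

/-- central element `x^(2^m)` of `ℂG` -/
noncomputable def tA : AlgG n m l :=
  MonoidAlgebra.of ℂ (Gp n m l) ((PresentedGroup.of 0 : Gp n m l) ^ 2 ^ m)

lemma tB_pow (hmn : m ≤ n) : tB n m l ^ 2 ^ (n - m) = 1 := by
  rw [tB, ← map_pow, ← pow_mul, ← pow_add, show m + (n - m) = n from by omega, hp1, map_one]

lemma tA_pow (hmn : m ≤ n) : tA n m l ^ 2 ^ (n - m) = 1 := by
  rw [tA, ← map_pow, ← pow_mul, ← pow_add, show m + (n - m) = n from by omega, gp1, map_one]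

noncomputable def sB : AlgH n m l := sroot (2 ^ m) (2 ^ (n - m)) (tB n m l)
noncomputable def sA : AlgG n m l := sroot (2 ^ m) (2 ^ (n - m)) (tA n m l)

lemma pow2_ne (k : ℕ) : (2:ℕ) ^ k ≠ 0 := (Nat.pos_of_ne_zero (by positivity)).ne'

lemma sB_pow (hmn : m ≤ n) : sB n m l ^ 2 ^ m = tB n m l :=
  sroot_pow_M (pow2_ne m) (pow2_ne (n - m)) (tB_pow n m l hmn)

lemma sA_pow (hmn : m ≤ n) : sA n m l ^ 2 ^ m = tA n m l :=
  sroot_pow_M (pow2_ne m) (pow2_ne (n - m)) (tA_pow n m l hmn)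

section Comms
variable (n m l : ℕ)

lemma sB_comm_a :
    Commute (MonoidAlgebra.of ℂ (Hp n m l) (PresentedGroup.of 0)) (sB n m l) :=
  commute_sroot (of_commute ((Commute.refl _).pow_right _))

lemma sB_comm_b (hm : 1 ≤ m) :
    Commute (MonoidAlgebra.of ℂ (Hp n m l) (PresentedGroup.of 1)) (sB n m l) :=
  commute_sroot (of_commute
    (commute_pow2 (derived_rels (hp4 n m l) (hp5 n m l)).2.2.1 hm).symm)

lemma sB_comm_c (hm : 1 ≤ m) :
    Commute (MonoidAlgebra.of ℂ (Hp n m l) (PresentedGroup.of 2)) (sB n m l) :=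
  commute_sroot (of_commute
    (commute_pow2 (derived_rels (hp4 n m l) (hp5 n m l)).2.2.2 hm).symm)

lemma sA_comm_x :
    Commute (MonoidAlgebra.of ℂ (Gp n m l) (PresentedGroup.of 0)) (sA n m l) :=
  commute_sroot (of_commute ((Commute.refl _).pow_right _))

lemma sA_comm_y (hm : 1 ≤ m) :
    Commute (MonoidAlgebra.of ℂ (Gp n m l) (PresentedGroup.of 1)) (sA n m l) :=
  commute_sroot (of_commute
    (commute_pow2 (derived_rels (gp4 n m l) (gp5 n m l)).2.2.1 hm).symm)

lemma sA_comm_z (hm : 1 ≤ m) :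
    Commute (MonoidAlgebra.of ℂ (Gp n m l) (PresentedGroup.of 2)) (sA n m l) :=
  commute_sroot (of_commute
    (commute_pow2 (derived_rels (gp4 n m l) (gp5 n m l)).2.2.2 hm).symm)

lemma isUnit_sB (hmn : m ≤ n) : IsUnit (sB n m l) := by
  refine (isUnit_pow_iff (pow2_ne m)).1 ?_
  rw [sB_pow n m l hmn, tB]
  exact ⟨unitOf _ _, rfl⟩

lemma isUnit_sA (hmn : m ≤ n) : IsUnit (sA n m l) := by
  refine (isUnit_pow_iff (pow2_ne m)).1 ?_
  rw [sA_pow n m l hmn, tA]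
  exact ⟨unitOf _ _, rfl⟩

noncomputable def uS (hmn : m ≤ n) : (AlgH n m l)ˣ := (isUnit_sB n m l hmn).unit
noncomputable def uU (hmn : m ≤ n) : (AlgG n m l)ˣ := (isUnit_sA n m l hmn).unit

@[simp] lemma uS_val (hmn : m ≤ n) : ((uS n m l hmn : (AlgH n m l)ˣ) : AlgH n m l) = sB n m l :=
  IsUnit.unit_spec _

@[simp] lemma uU_val (hmn : m ≤ n) : ((uU n m l hmn : (AlgG n m l)ˣ) : AlgG n m l) = sA n m l :=
  IsUnit.unit_spec _

lemma uS_pow (hmn : m ≤ n) : (uS n m l hmn) ^ 2 ^ m = unitOf _ ((PresentedGroup.of 0 : Hp n m l) ^ 2 ^ m) := by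
  refine Units.ext ?_
  rw [Units.val_pow_eq_pow_val, uS_val, sB_pow n m l hmn, unitOf_val, tB]

lemma uU_pow (hmn : m ≤ n) : (uU n m l hmn) ^ 2 ^ m = unitOf _ ((PresentedGroup.of 0 : Gp n m l) ^ 2 ^ m) := by
  refine Units.ext ?_
  rw [Units.val_pow_eq_pow_val, uU_val, sA_pow n m l hmn, unitOf_val, tA]

lemma uS_comm_a (hmn : m ≤ n) : Commute (unitOf _ (PresentedGroup.of 0 : Hp n m l)) (uS n m l hmn) :=
  units_commute (by rw [uS_val, unitOf_val]; exact (sB_comm_a n m l).eq)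

lemma uS_comm_b (hm : 1 ≤ m) (hmn : m ≤ n) :
    Commute (unitOf _ (PresentedGroup.of 1 : Hp n m l)) (uS n m l hmn) :=
  units_commute (by rw [uS_val, unitOf_val]; exact (sB_comm_b n m l hm).eq)

lemma uS_comm_c (hm : 1 ≤ m) (hmn : m ≤ n) :
    Commute (unitOf _ (PresentedGroup.of 2 : Hp n m l)) (uS n m l hmn) :=
  units_commute (by rw [uS_val, unitOf_val]; exact (sB_comm_c n m l hm).eq)

lemma uU_comm_x (hmn : m ≤ n) : Commute (unitOf _ (PresentedGroup.of 0 : Gp n m l)) (uU n m l hmn) :=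
  units_commute (by rw [uU_val, unitOf_val]; exact (sA_comm_x n m l).eq)

lemma uU_comm_y (hm : 1 ≤ m) (hmn : m ≤ n) :
    Commute (unitOf _ (PresentedGroup.of 1 : Gp n m l)) (uU n m l hmn) :=
  units_commute (by rw [uU_val, unitOf_val]; exact (sA_comm_y n m l hm).eq)

lemma uU_comm_z (hm : 1 ≤ m) (hmn : m ≤ n) :
    Commute (unitOf _ (PresentedGroup.of 2 : Gp n m l)) (uU n m l hmn) :=
  units_commute (by rw [uU_val, unitOf_val]; exact (sA_comm_z n m l hm).eq)

end Comms

section Maps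
variable (n m l : ℕ)

noncomputable def φf (hmn : m ≤ n) : Fin 3 → (AlgH n m l)ˣ :=
  ![unitOf _ (PresentedGroup.of 0), unitOf _ (PresentedGroup.of 1) * (uS n m l hmn)⁻¹,
    unitOf _ (PresentedGroup.of 2)]

noncomputable def ψf (hmn : m ≤ n) : Fin 3 → (AlgG n m l)ˣ :=
  ![unitOf _ (PresentedGroup.of 0), unitOf _ (PresentedGroup.of 1) * (uU n m l hmn),
    unitOf _ (PresentedGroup.of 2)]

@[simp] lemma φf0 (hmn : m ≤ n) : φf n m l hmn 0 = unitOf _ (PresentedGroup.of 0) := rfl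
@[simp] lemma φf1 (hmn : m ≤ n) : φf n m l hmn 1 = unitOf _ (PresentedGroup.of 1) * (uS n m l hmn)⁻¹ := rfl
@[simp] lemma φf2 (hmn : m ≤ n) : φf n m l hmn 2 = unitOf _ (PresentedGroup.of 2) := rfl
@[simp] lemma ψf0 (hmn : m ≤ n) : ψf n m l hmn 0 = unitOf _ (PresentedGroup.of 0) := rfl
@[simp] lemma ψf1 (hmn : m ≤ n) : ψf n m l hmn 1 = unitOf _ (PresentedGroup.of 1) * (uU n m l hmn) := rfl
@[simp] lemma ψf2 (hmn : m ≤ n) : ψf n m l hmn 2 = unitOf _ (PresentedGroup.of 2) := rfl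

lemma hφ (hm : 1 ≤ m) (hmn : m ≤ n) : ∀ r ∈ grels n m l, FreeGroup.lift (φf n m l hmn) r = 1 := by
  intro r hr
  simp only [grels, Set.mem_insert_iff, Set.mem_singleton_iff] at hr
  have hCa := (uS_comm_a n m l hmn).symm.inv_left
  have hCb := (uS_comm_b n m l hm hmn).symm.inv_left
  have hCc := (uS_comm_c n m l hm hmn).symm.inv_left
  rcases hr with rfl | rfl | rfl | rfl | rfl | rfl
  · simp only [map_pow, FreeGroup.lift_apply_of, φf0]
    rw [← map_pow, hp1, map_one]
  · simp only [map_pow, FreeGroup.lift_apply_of, φf1]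
    rw [((uS_comm_b n m l hm hmn).inv_right).mul_pow, ← map_pow, inv_pow, uS_pow n m l hmn,
      hp2 n m l, mul_inv_cancel]
  · simp only [map_pow, FreeGroup.lift_apply_of, φf2]
    rw [← map_pow, hp3, map_one]
  · simp only [map_mul, map_inv, FreeGroup.lift_apply_of, φf0, φf1, φf2]
    rw [commute_conj_cancel hCa hCb]
    simp only [← map_inv, ← map_mul]
    rw [hp4, map_one]
  · simp only [map_mul, map_inv, map_pow, FreeGroup.lift_apply_of, φf0, φf2]
    simp only [← map_inv, ← map_pow, ← map_mul]
    rw [hp5, map_one]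
  · simp only [map_mul, map_inv, map_pow, FreeGroup.lift_apply_of, φf1, φf2]
    rw [commute_conj_cancel' hCb hCc]
    simp only [← map_inv, ← map_pow, ← map_mul]
    rw [hp6, map_one]

lemma hψ (hm : 1 ≤ m) (hmn : m ≤ n) : ∀ r ∈ hrels n m l, FreeGroup.lift (ψf n m l hmn) r = 1 := by
  intro r hr
  simp only [hrels, Set.mem_insert_iff, Set.mem_singleton_iff] at hr
  have hCx := (uU_comm_x n m l hmn).symm
  have hCy := (uU_comm_y n m l hm hmn).symm
  have hCz := (uU_comm_z n m l hm hmn).symm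
  rcases hr with rfl | rfl | rfl | rfl | rfl | rfl
  · simp only [map_pow, FreeGroup.lift_apply_of, ψf0]
    rw [← map_pow, gp1, map_one]
  · simp only [map_mul, map_pow, map_inv, FreeGroup.lift_apply_of, ψf0, ψf1]
    rw [((uU_comm_y n m l hm hmn)).mul_pow, ← map_pow, ← map_pow, uU_pow n m l hmn,
      gp2 n m l, map_one, one_mul, mul_inv_cancel]
  · simp only [map_pow, FreeGroup.lift_apply_of, ψf2]
    rw [← map_pow, gp3, map_one]
  · simp only [map_mul, map_inv, FreeGroup.lift_apply_of, ψf0, ψf1, ψf2]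
    rw [commute_conj_cancel hCx hCy]
    simp only [← map_inv, ← map_mul]
    rw [gp4, map_one]
  · simp only [map_mul, map_inv, map_pow, FreeGroup.lift_apply_of, ψf0, ψf2]
    simp only [← map_inv, ← map_pow, ← map_mul]
    rw [gp5, map_one]
  · simp only [map_mul, map_inv, map_pow, FreeGroup.lift_apply_of, ψf1, ψf2]
    rw [commute_conj_cancel' hCy hCz]
    simp only [← map_inv, ← map_pow, ← map_mul]
    rw [gp6, map_one]

noncomputable def ΦM (hm : 1 ≤ m) (hmn : m ≤ n) : Gp n m l →* (AlgH n m l)ˣ := PresentedGroup.toGroup (hφ n m l hm hmn)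
noncomputable def ΨM (hm : 1 ≤ m) (hmn : m ≤ n) : Hp n m l →* (AlgG n m l)ˣ := PresentedGroup.toGroup (hψ n m l hm hmn)

noncomputable def Φ (hm : 1 ≤ m) (hmn : m ≤ n) : AlgG n m l →ₐ[ℂ] AlgH n m l :=
  MonoidAlgebra.lift ℂ _ _ ((Units.coeHom _).comp (ΦM n m l hm hmn))

noncomputable def Ψ (hm : 1 ≤ m) (hmn : m ≤ n) : AlgH n m l →ₐ[ℂ] AlgG n m l :=
  MonoidAlgebra.lift ℂ _ _ ((Units.coeHom _).comp (ΨM n m l hm hmn))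

@[simp] lemma Φ_of (hm : 1 ≤ m) (hmn : m ≤ n) (g : Gp n m l) :
    Φ n m l hm hmn (MonoidAlgebra.of ℂ _ g) = ↑(ΦM n m l hm hmn g) := by
  rw [Φ, MonoidAlgebra.lift_of]; rfl

@[simp] lemma Ψ_of (hm : 1 ≤ m) (hmn : m ≤ n) (g : Hp n m l) :
    Ψ n m l hm hmn (MonoidAlgebra.of ℂ _ g) = ↑(ΨM n m l hm hmn g) := by
  rw [Ψ, MonoidAlgebra.lift_of]; rfl

end Maps

section Glue
variable (n m l : ℕ)

noncomputable def ΨMH (hm : 1 ≤ m) (hmn : m ≤ n) : AlgH n m l →* AlgG n m l :=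
  (Ψ n m l hm hmn).toRingHom.toMonoidHom

noncomputable def ΦMH (hm : 1 ≤ m) (hmn : m ≤ n) : AlgG n m l →* AlgH n m l :=
  (Φ n m l hm hmn).toRingHom.toMonoidHom

@[simp] lemma ΨMH_apply (hm : 1 ≤ m) (hmn : m ≤ n) (x : AlgH n m l) :
    ΨMH n m l hm hmn x = Ψ n m l hm hmn x := rfl

@[simp] lemma ΦMH_apply (hm : 1 ≤ m) (hmn : m ≤ n) (x : AlgG n m l) :
    ΦMH n m l hm hmn x = Φ n m l hm hmn x := rfl

@[simp] lemma ΦM_of (hm : 1 ≤ m) (hmn : m ≤ n) (i : Fin 3) :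
    ΦM n m l hm hmn (PresentedGroup.of i) = φf n m l hmn i :=
  PresentedGroup.toGroup.of _

@[simp] lemma ΨM_of (hm : 1 ≤ m) (hmn : m ≤ n) (i : Fin 3) :
    ΨM n m l hm hmn (PresentedGroup.of i) = ψf n m l hmn i :=
  PresentedGroup.toGroup.of _

lemma map_uS (hm : 1 ≤ m) (hmn : m ≤ n) :
    Units.map (ΨMH n m l hm hmn) (uS n m l hmn) = uU n m l hmn := by
  apply Units.ext
  rw [Units.coe_map]
  show Ψ n m l hm hmn ((uS n m l hmn : AlgH n m l)) = _
  rw [uS_val, uU_val, sB, sA, map_sroot]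
  congr 1
  rw [tB, Ψ_of, map_pow, ΨM_of, ψf0, tA]
  rw [Units.val_pow_eq_pow_val, unitOf_val, ← map_pow]

lemma map_uU (hm : 1 ≤ m) (hmn : m ≤ n) :
    Units.map (ΦMH n m l hm hmn) (uU n m l hmn) = uS n m l hmn := by
  apply Units.ext
  rw [Units.coe_map]
  show Φ n m l hm hmn ((uU n m l hmn : AlgG n m l)) = _
  rw [uU_val, uS_val, sB, sA, map_sroot]
  congr 1
  rw [tA, Φ_of, map_pow, ΦM_of, φf0, tB]
  rw [Units.val_pow_eq_pow_val, unitOf_val, ← map_pow]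

lemma map_unitOfH (hm : 1 ≤ m) (hmn : m ≤ n) (g : Hp n m l) :
    Units.map (ΨMH n m l hm hmn) (unitOf _ g) = ΨM n m l hm hmn g := by
  apply Units.ext
  rw [Units.coe_map]
  show Ψ n m l hm hmn (MonoidAlgebra.of ℂ _ g) = _
  rw [Ψ_of]

lemma map_unitOfG (hm : 1 ≤ m) (hmn : m ≤ n) (g : Gp n m l) :
    Units.map (ΦMH n m l hm hmn) (unitOf _ g) = ΦM n m l hm hmn g := by
  apply Units.ext
  rw [Units.coe_map]
  show Φ n m l hm hmn (MonoidAlgebra.of ℂ _ g) = _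
  rw [Φ_of]

lemma comp1 (hm : 1 ≤ m) (hmn : m ≤ n) :
    (Units.map (ΨMH n m l hm hmn)).comp (ΦM n m l hm hmn) = unitOf (Gp n m l) := by
  apply PresentedGroup.ext
  intro i
  fin_cases i
  · show Units.map (ΨMH n m l hm hmn) (ΦM n m l hm hmn (PresentedGroup.of 0)) = _
    rw [ΦM_of, φf0, map_unitOfH, ΨM_of, ψf0]; rfl
  · show Units.map (ΨMH n m l hm hmn) (ΦM n m l hm hmn (PresentedGroup.of 1)) = _
    rw [ΦM_of, φf1, map_mul, map_inv, map_uS, map_unitOfH, ΨM_of, ψf1,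
      mul_inv_cancel_right]; rfl
  · show Units.map (ΨMH n m l hm hmn) (ΦM n m l hm hmn (PresentedGroup.of 2)) = _
    rw [ΦM_of, φf2, map_unitOfH, ΨM_of, ψf2]; rfl

lemma comp2 (hm : 1 ≤ m) (hmn : m ≤ n) :
    (Units.map (ΦMH n m l hm hmn)).comp (ΨM n m l hm hmn) = unitOf (Hp n m l) := by
  apply PresentedGroup.ext
  intro i
  fin_cases i
  · show Units.map (ΦMH n m l hm hmn) (ΨM n m l hm hmn (PresentedGroup.of 0)) = _
    rw [ΨM_of, ψf0, map_unitOfG, ΦM_of, φf0]; rfl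
  · show Units.map (ΦMH n m l hm hmn) (ΨM n m l hm hmn (PresentedGroup.of 1)) = _
    rw [ΨM_of, ψf1, map_mul, map_uU, map_unitOfG, ΦM_of, φf1,
      inv_mul_cancel_right]; rfl
  · show Units.map (ΦMH n m l hm hmn) (ΨM n m l hm hmn (PresentedGroup.of 2)) = _
    rw [ΨM_of, ψf2, map_unitOfG, ΦM_of, φf2]; rfl

lemma ΨΦ (hm : 1 ≤ m) (hmn : m ≤ n) :
    (Ψ n m l hm hmn).comp (Φ n m l hm hmn) = AlgHom.id ℂ (AlgG n m l) := by
  refine MonoidAlgebra.algHom_ext ?_ (Subsingleton.elim _ _)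
  intro g
  have h := congrArg Units.val (DFunLike.congr_fun (comp1 n m l hm hmn) g)
  rw [MonoidHom.comp_apply, Units.coe_map] at h
  show Ψ n m l hm hmn (Φ n m l hm hmn (MonoidAlgebra.single g 1)) = MonoidAlgebra.single g 1
  rw [← MonoidAlgebra.of_apply, Φ_of]
  simpa using h

lemma ΦΨ (hm : 1 ≤ m) (hmn : m ≤ n) :
    (Φ n m l hm hmn).comp (Ψ n m l hm hmn) = AlgHom.id ℂ (AlgH n m l) := by
  refine MonoidAlgebra.algHom_ext ?_ (Subsingleton.elim _ _)
  intro g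
  have h := congrArg Units.val (DFunLike.congr_fun (comp2 n m l hm hmn) g)
  rw [MonoidHom.comp_apply, Units.coe_map] at h
  show Φ n m l hm hmn (Ψ n m l hm hmn (MonoidAlgebra.single g 1)) = MonoidAlgebra.single g 1
  rw [← MonoidAlgebra.of_apply, Ψ_of]
  simpa using h

noncomputable def theEquiv (hm : 1 ≤ m) (hmn : m ≤ n) : AlgG n m l ≃ₐ[ℂ] AlgH n m l :=
  AlgEquiv.ofAlgHom (Φ n m l hm hmn) (Ψ n m l hm hmn) (ΦΨ n m l hm hmn) (ΨΦ n m l hm hmn)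

end Glue
end Paper

theorem stmt3 (n m l : ℕ) (h1 : n > m) (h2 : m > l) (h3 : 2 ≤ l) :
    Nonempty (MonoidAlgebra ℂ (GrpG n m l) ≃ₐ[ℂ] MonoidAlgebra ℂ (GrpH n m l)) := by
  have hm : 1 ≤ m := by omega
  have hmn : m ≤ n := by omega
  exact ⟨Paper.theEquiv n m l hm hmn⟩
end

section
/- Let S be a commutative ring with an ideal n and let G be a finite group. Write F = S/n, let π : S → F be the natural projection, and let π̂ : SG → FG be the induced ring homomorphism on group algebras (applying π to each coefficient). Then Δ(SG) ∩ π̂⁻¹(Δ(FG)²) = nΔ(SG) + Δ(SG)², where Δ(SG) denotes the augmentation ideal of SG. -/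
/-- The augmentation map `ε : SG → S`, sending `Σ α_g g` to `Σ α_g`. -/
noncomputable def aug (S : Type) [CommRing S] (G : Type) [Group G] :
    MonoidAlgebra S G →ₐ[S] S := MonoidAlgebra.lift S S G 1

/-- The augmentation ideal `Δ(SG) = ker ε`. -/
noncomputable def augIdeal (S : Type) [CommRing S] (G : Type) [Group G] :
    Ideal (MonoidAlgebra S G) := RingHom.ker (aug S G)

/-- The homomorphism `π̂ : SG → (S/n)G` applying the projection `π : S → S/n`
to each coefficient. -/
noncomputable def coeffProj (S : Type) [CommRing S] (nn : Ideal S) (G : Type) [Group G] :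
    MonoidAlgebra S G →ₐ[S] MonoidAlgebra (S ⧸ nn) G :=
  MonoidAlgebra.lift S (MonoidAlgebra (S ⧸ nn) G) G (MonoidAlgebra.of (S ⧸ nn) G)

lemma pow_two' {R : Type*} [Ring R] (I : Ideal R) : I ^ 2 = I * I := by
  rw [Submodule.pow_succ, Submodule.pow_one]

section aux
variable (S : Type) [CommRing S] (G : Type) [Group G]

lemma aug_single (g : G) (a : S) : aug S G (MonoidAlgebra.single g a) = a := by
  simp [aug, MonoidAlgebra.lift_single]

lemma sub_one_mem (g : G) : MonoidAlgebra.of S G g - 1 ∈ augIdeal S G := by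
  simp [augIdeal, RingHom.mem_ker, map_sub, aug, MonoidAlgebra.lift_of]

omit [Group G] in
lemma repr_sum (x : MonoidAlgebra S G) :
    x = ∑ g ∈ x.coeff.support, MonoidAlgebra.single g (x.coeff g) := by
  conv_lhs => rw [← MonoidAlgebra.sum_coeff_single x]
  rfl

lemma key_repr (x : MonoidAlgebra S G) (hx : x ∈ augIdeal S G) :
    x = ∑ g ∈ x.coeff.support, algebraMap S (MonoidAlgebra S G) (x.coeff g) * (MonoidAlgebra.of S G g - 1) := by
  have haug : ∑ g ∈ x.coeff.support, x.coeff g = 0 := by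
    have h0 : aug S G x = 0 := by rwa [augIdeal, RingHom.mem_ker] at hx
    rw [← h0]
    conv_rhs => rw [repr_sum S G x, map_sum]
    exact (Finset.sum_congr rfl fun g _ => (aug_single S G g (x.coeff g)).symm)
  have key : ∑ g ∈ x.coeff.support, algebraMap S (MonoidAlgebra S G) (x.coeff g) * (MonoidAlgebra.of S G g - 1)
      = (∑ g ∈ x.coeff.support, MonoidAlgebra.single g (x.coeff g))
        - algebraMap S (MonoidAlgebra S G) (∑ g ∈ x.coeff.support, x.coeff g) := by
    rw [map_sum, ← Finset.sum_sub_distrib]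
    refine Finset.sum_congr rfl fun g _ => ?_
    rw [mul_sub, mul_one, ← MonoidAlgebra.single_eq_algebraMap_mul_of]
  rw [key, haug, map_zero, sub_zero]
  exact repr_sum S G x

lemma augIdeal_eq_span :
    augIdeal S G = Ideal.span (Set.range fun g : G => MonoidAlgebra.of S G g - 1) := by
  apply le_antisymm
  · intro x hx
    rw [key_repr S G x hx]
    exact Ideal.sum_mem _ fun g _ =>
      Ideal.mul_mem_left _ _ (Ideal.subset_span ⟨g, rfl⟩)
  · rw [Ideal.span_le]
    rintro _ ⟨g, rfl⟩
    exact sub_one_mem S G g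

variable (nn : Ideal S)

lemma coeffProj_single (g : G) (a : S) :
    coeffProj S nn G (MonoidAlgebra.single g a)
      = MonoidAlgebra.single g (Ideal.Quotient.mk nn a) := by
  rw [← MonoidAlgebra.smul_of, map_smul, coeffProj, MonoidAlgebra.lift_of,
    Algebra.smul_def, ← MonoidAlgebra.single_algebraMap_eq_algebraMap_mul_of]
  rfl

lemma coeffProj_apply (x : MonoidAlgebra S G) (g : G) :
    (coeffProj S nn G x).coeff g = Ideal.Quotient.mk nn (x.coeff g) := by
  induction x using MonoidAlgebra.induction_linear with
  | zero => simp
  | add f h hf hh =>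
      rw [map_add, MonoidAlgebra.coeff_add, Finsupp.add_apply, hf, hh, MonoidAlgebra.coeff_add, Finsupp.add_apply, map_add]
  | single a b =>
      rw [coeffProj_single]
      by_cases h : a = g
      · subst h; rw [MonoidAlgebra.coeff_single, MonoidAlgebra.coeff_single, Finsupp.single_eq_same, Finsupp.single_eq_same]
      · rw [MonoidAlgebra.coeff_single, MonoidAlgebra.coeff_single, Finsupp.single_eq_of_ne (Ne.symm h), Finsupp.single_eq_of_ne (Ne.symm h), map_zero]

lemma coeffProj_surjective : Function.Surjective (coeffProj S nn G) := by
  intro y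
  induction y using MonoidAlgebra.induction_linear with
  | zero => exact ⟨0, map_zero _⟩
  | add f h hf hh =>
      obtain ⟨a, ha⟩ := hf; obtain ⟨b, hb⟩ := hh
      exact ⟨a + b, by rw [map_add, ha, hb]⟩
  | single g b =>
      obtain ⟨a, rfl⟩ := Ideal.Quotient.mk_surjective b
      exact ⟨MonoidAlgebra.single g a, coeffProj_single S G nn g a⟩

lemma mem_ker_coeffs {x : MonoidAlgebra S G} (hx : coeffProj S nn G x = 0) (g : G) :
    x.coeff g ∈ nn := by
  have hg : (coeffProj S nn G x).coeff g = (0 : MonoidAlgebra (S ⧸ nn) G).coeff g := by rw [hx]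
  rw [coeffProj_apply, MonoidAlgebra.coeff_zero, Finsupp.zero_apply] at hg
  exact Ideal.Quotient.eq_zero_iff_mem.1 hg

lemma ker_coeffProj :
    RingHom.ker (coeffProj S nn G) = Ideal.map (algebraMap S (MonoidAlgebra S G)) nn := by
  apply le_antisymm
  · intro x hx
    have hx0 : coeffProj S nn G x = 0 := by rwa [RingHom.mem_ker] at hx
    have hcoef : ∀ g : G, x.coeff g ∈ nn := mem_ker_coeffs S G nn hx0
    rw [repr_sum S G x]
    refine Ideal.sum_mem _ fun g _ => ?_
    have hs := MonoidAlgebra.single_eq_algebraMap_mul_of (R := S) (M := G) g (x.coeff g)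
    rw [hs, Algebra.commutes]
    exact Ideal.mul_mem_left _ _
      (Ideal.mem_map_of_mem (algebraMap S (MonoidAlgebra S G)) (hcoef g))
  · rw [Ideal.map_le_iff_le_comap]
    intro a ha
    rw [Ideal.mem_comap, RingHom.mem_ker]
    show coeffProj S nn G (algebraMap S (MonoidAlgebra S G) a) = 0
    rw [AlgHom.commutes, MonoidAlgebra.coe_algebraMap]
    show MonoidAlgebra.single 1 (algebraMap S (S ⧸ nn) a) = 0
    have h0 : algebraMap S (S ⧸ nn) a = 0 := Ideal.Quotient.eq_zero_iff_mem.2 ha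
    rw [h0]
    simp

lemma map_augIdeal :
    Ideal.map (coeffProj S nn G) (augIdeal S G) = augIdeal (S ⧸ nn) G := by
  rw [augIdeal_eq_span, augIdeal_eq_span, Ideal.map_span]
  congr 1
  ext y
  constructor
  · rintro ⟨_, ⟨g, rfl⟩, rfl⟩
    exact ⟨g, by rw [map_sub, map_one, coeffProj, MonoidAlgebra.lift_of]⟩
  · rintro ⟨g, rfl⟩
    exact ⟨MonoidAlgebra.of S G g - 1, ⟨g, rfl⟩,
      by rw [map_sub, map_one, coeffProj, MonoidAlgebra.lift_of]⟩

lemma map_augIdeal_sq :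
    Ideal.map (coeffProj S nn G) (augIdeal S G ^ 2) = augIdeal (S ⧸ nn) G ^ 2 := by
  rw [pow_two', pow_two']
  have hΔ : ∀ r ∈ augIdeal S G, coeffProj S nn G r ∈ augIdeal (S ⧸ nn) G := fun r hr =>
    map_augIdeal S G nn ▸ Ideal.mem_map_of_mem _ hr
  apply le_antisymm
  · rw [Ideal.map_le_iff_le_comap]
    refine Ideal.mul_le.2 fun r hr s hs => ?_
    rw [Ideal.mem_comap, map_mul]
    exact Ideal.mul_mem_mul (hΔ r hr) (hΔ s hs)
  · refine Ideal.mul_le.2 fun y hy z hz => ?_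
    rw [← map_augIdeal S G nn] at hy hz
    obtain ⟨a, ha, rfl⟩ :=
      Ideal.mem_map_iff_of_surjective _ (coeffProj_surjective S G nn) |>.1 hy
    obtain ⟨b, hb, rfl⟩ :=
      Ideal.mem_map_iff_of_surjective _ (coeffProj_surjective S G nn) |>.1 hz
    rw [← map_mul]
    exact Ideal.mem_map_of_mem _ (Ideal.mul_mem_mul ha hb)

end aux

theorem stmt6 (S : Type) [CommRing S] (nn : Ideal S) (G : Type) [Group G] [Finite G] :
    augIdeal S G ⊓ Ideal.comap (coeffProj S nn G) (augIdeal (S ⧸ nn) G ^ 2)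
      = Ideal.map (algebraMap S (MonoidAlgebra S G)) nn * augIdeal S G + augIdeal S G ^ 2 := by
  have h1 : Ideal.comap (coeffProj S nn G) (augIdeal (S ⧸ nn) G ^ 2)
      = augIdeal S G ^ 2 ⊔ RingHom.ker (coeffProj S nn G) := by
    rw [← map_augIdeal_sq S G nn,
      Ideal.comap_map_of_surjective _ (coeffProj_surjective S G nn),
      RingHom.ker_eq_comap_bot]
  rw [h1, ker_coeffProj]
  have hle : augIdeal S G ^ 2 ≤ augIdeal S G := Ideal.pow_le_self two_ne_zero
  rw [inf_comm, sup_inf_assoc_of_le _ hle]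
  have h2 : Ideal.map (algebraMap S (MonoidAlgebra S G)) nn ⊓ augIdeal S G
      = Ideal.map (algebraMap S (MonoidAlgebra S G)) nn * augIdeal S G := by
    apply le_antisymm
    · rintro x ⟨hxN, hxΔ⟩
      have hker : coeffProj S nn G x = 0 := by
        have hm : x ∈ RingHom.ker (coeffProj S nn G) := by rw [ker_coeffProj]; exact hxN
        rwa [RingHom.mem_ker] at hm
      have hcoef : ∀ g : G, x.coeff g ∈ nn := mem_ker_coeffs S G nn hker
      rw [key_repr S G x hxΔ]
      refine Ideal.sum_mem _ fun g _ => ?_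
      exact Ideal.mul_mem_mul (Ideal.mem_map_of_mem _ (hcoef g)) (sub_one_mem S G g)
    · refine le_inf ?_ ?_
      · rw [← ker_coeffProj]
        refine Ideal.mul_le.2 fun r hr s _ => ?_
        rw [RingHom.mem_ker] at hr ⊢
        rw [map_mul, hr, zero_mul]
      · exact Ideal.mul_le.2 fun r _ s hs => Ideal.mul_mem_left _ r hs
  rw [h2, sup_comm, ← Ideal.add_eq_sup]
end

section
/- Let S be a commutative ring with an ideal n and let G be a finite group. Write F = S/n and set Δ(SG : n) = {x ∈ SG : ε(x) ∈ n}, where ε : SG → S is the augmentation map. Then there is an isomorphism of F-modules Δ(SG : n)/Δ(SG : n)² ≅ n/n² ⊕ Δ(FG)/Δ(FG)², where Δ(FG) is the augmentation ideal of FG. -/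
/-- The relative augmentation ideal `Δ(SG : n) = ε⁻¹(n) = {x ∈ SG : ε(x) ∈ n}`. -/
noncomputable def relAugIdeal (S : Type) [CommRing S] (nn : Ideal S) (G : Type) [Group G] :
    Ideal (MonoidAlgebra S G) := Ideal.comap (aug S G) nn

/-- For ideals `J ≤ I` of an `S`-algebra `A`, the quotient `I/J` as an `S`-module
(more precisely `I/(I ∩ J)`). -/
abbrev modQuot (S : Type) [CommRing S] {A : Type} [Ring A] [Algebra S A] (I J : Ideal A) :=
  ↥(Submodule.restrictScalars S I) ⧸
    Submodule.comap (Submodule.restrictScalars S I).subtype (Submodule.restrictScalars S J)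

namespace Stmt7Aux

variable (S : Type) [CommRing S] (nn : Ideal S) (G : Type) [Group G]

lemma aug_single (g : G) (a : S) : aug S G (MonoidAlgebra.single g a) = a := by
  simp [aug, MonoidAlgebra.lift_single]

lemma aug_algebraMap' (a : S) : aug S G (algebraMap S (MonoidAlgebra S G) a) = a :=
  (aug S G).commutes a

/-- The base-change map `SG → FG`. -/
noncomputable def pi : MonoidAlgebra S G →ₐ[S] MonoidAlgebra (S ⧸ nn) G :=
  MonoidAlgebra.lift S _ G ((MonoidAlgebra.of (S ⧸ nn) G))

lemma pi_single (g : G) (a : S) :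
    pi S nn G (MonoidAlgebra.single g a)
      = MonoidAlgebra.single g (Ideal.Quotient.mk nn a) := by
  rw [pi, MonoidAlgebra.lift_single]
  show a • MonoidAlgebra.single g (1 : S ⧸ nn) = _
  rw [MonoidAlgebra.smul_single, Algebra.smul_def, mul_one, Ideal.Quotient.algebraMap_eq]

lemma pi_apply (x : MonoidAlgebra S G) (g : G) :
    (pi S nn G x).coeff g = Ideal.Quotient.mk nn (x.coeff g) := by
  induction x using MonoidAlgebra.induction_linear with
  | zero => simp
  | add f h hf hh =>
      rw [map_add]
      show (pi S nn G f + pi S nn G h).coeff g = _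
      rw [MonoidAlgebra.coeff_add, Finsupp.add_apply, hf, hh]
      show _ = Ideal.Quotient.mk nn (f.coeff g + h.coeff g)
      rw [map_add]
  | single a b =>
      rw [pi_single]
      show Finsupp.single a (Ideal.Quotient.mk nn b) g = Ideal.Quotient.mk nn (Finsupp.single a b g)
      rcases eq_or_ne a g with rfl | hne
      · simp
      · simp [Finsupp.single_apply, hne]

lemma pi_surjective : Function.Surjective (pi S nn G) := by
  intro z
  classical
  refine ⟨MonoidAlgebra.ofCoeff <| Finsupp.mapRange (fun b => if b = 0 then 0 else Function.surjInv Ideal.Quotient.mk_surjective b) (by simp) z.coeff, ?_⟩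
  apply MonoidAlgebra.ext
  apply Finsupp.ext
  intro g
  rw [pi_apply]
  rw [MonoidAlgebra.coeff_ofCoeff]
  rw [Finsupp.mapRange_apply]
  split_ifs with h
  · simp [h]
  · exact Function.surjInv_eq Ideal.Quotient.mk_surjective (z.coeff g)

lemma mem_ker_pi (x : MonoidAlgebra S G) : pi S nn G x = 0 ↔ ∀ g, x.coeff g ∈ nn := by
  rw [← MonoidAlgebra.coeff_inj, Finsupp.ext_iff]
  refine forall_congr' fun g => ?_
  rw [pi_apply]
  show Ideal.Quotient.mk nn (x.coeff g) = (0 : MonoidAlgebra (S ⧸ nn) G).coeff g ↔ _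
  rw [MonoidAlgebra.coeff_zero, Finsupp.zero_apply, Ideal.Quotient.eq_zero_iff_mem]

lemma aug_pi (x : MonoidAlgebra S G) :
    aug (S ⧸ nn) G (pi S nn G x) = Ideal.Quotient.mk nn (aug S G x) := by
  induction x using MonoidAlgebra.induction_linear with
  | zero => simp
  | add f h hf hh => rw [map_add, map_add, map_add, hf, hh, map_add]
  | single a b => rw [pi_single, aug_single, aug_single]

lemma aug_algebraMap (s : S) :
    aug (S ⧸ nn) G (algebraMap S (MonoidAlgebra (S ⧸ nn) G) s) = Ideal.Quotient.mk nn s := by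
  have : algebraMap S (MonoidAlgebra (S ⧸ nn) G) s
      = MonoidAlgebra.single 1 (algebraMap S (S ⧸ nn) s) := by
    rw [MonoidAlgebra.coe_algebraMap]; rfl
  rw [this, aug_single, Ideal.Quotient.algebraMap_eq]


lemma mem_relAug (x : MonoidAlgebra S G) : x ∈ relAugIdeal S nn G ↔ aug S G x ∈ nn :=
  Ideal.mem_comap

lemma mem_augIdeal {R : Type} [CommRing R] (x : MonoidAlgebra R G) :
    x ∈ augIdeal R G ↔ aug R G x = 0 :=
  RingHom.mem_ker

lemma ideal_sq {R : Type} [Ring R] (I : Ideal R) : I ^ 2 = I * I := by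
  rw [Submodule.pow_succ, Submodule.pow_one]

/-- generic: a multiplicative-ideal-respecting map sends `I²` into `J²`. -/
lemma sq_map {R A : Type} [Ring R] [Ring A] (f : R →+* A) (I : Ideal R) (J : Ideal A)
    (h : ∀ r ∈ I, f r ∈ J) {x : R} (hx : x ∈ I ^ 2) : f x ∈ J ^ 2 := by
  rw [ideal_sq] at hx
  rw [ideal_sq]
  refine Submodule.mul_induction_on hx (fun m hm n hn => ?_) (fun a b ha hb => ?_)
  · rw [map_mul]; exact Ideal.mul_mem_mul (h m hm) (h n hn)
  · rw [map_add]; exact add_mem ha hb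

lemma pi_mem_augIdeal {x : MonoidAlgebra S G} (hx : x ∈ relAugIdeal S nn G) :
    pi S nn G x ∈ augIdeal (S ⧸ nn) G := by
  rw [mem_relAug] at hx
  rw [mem_augIdeal, aug_pi, Ideal.Quotient.eq_zero_iff_mem]
  exact hx

lemma alg_mem_augIdeal {a : S} (ha : a ∈ nn) :
    algebraMap S (MonoidAlgebra (S ⧸ nn) G) a ∈ augIdeal (S ⧸ nn) G := by
  rw [mem_augIdeal, aug_algebraMap, Ideal.Quotient.eq_zero_iff_mem]
  exact ha

lemma algS_mem_relAug {a : S} (ha : a ∈ nn) :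
    algebraMap S (MonoidAlgebra S G) a ∈ relAugIdeal S nn G := by
  rw [mem_relAug, aug_algebraMap']
  exact ha

-- Lemma A, part 1
lemma aug_mem_sq {x : MonoidAlgebra S G} (hx : x ∈ relAugIdeal S nn G ^ 2) :
    aug S G x ∈ nn ^ 2 :=
  sq_map (aug S G).toRingHom _ nn (fun r hr => (mem_relAug S nn G r).1 hr) hx

-- Lemma A, part 2
lemma pi_mem_sq {x : MonoidAlgebra S G} (hx : x ∈ relAugIdeal S nn G ^ 2) :
    pi S nn G x ∈ augIdeal (S ⧸ nn) G ^ 2 :=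
  sq_map (pi S nn G).toRingHom _ _ (fun r hr => pi_mem_augIdeal S nn G hr) hx

lemma alg_mem_sq {a : S} (ha : a ∈ nn ^ 2) :
    algebraMap S (MonoidAlgebra (S ⧸ nn) G) a ∈ augIdeal (S ⧸ nn) G ^ 2 :=
  sq_map (algebraMap S (MonoidAlgebra (S ⧸ nn) G)) nn _
    (fun r hr => alg_mem_augIdeal S nn G hr) ha

lemma algS_mem_sq {a : S} (ha : a ∈ nn ^ 2) :
    algebraMap S (MonoidAlgebra S G) a ∈ relAugIdeal S nn G ^ 2 :=
  sq_map (algebraMap S (MonoidAlgebra S G)) nn _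
    (fun r hr => algS_mem_relAug S nn G hr) ha

lemma exists_lift {z : MonoidAlgebra (S ⧸ nn) G} (hz : z ∈ augIdeal (S ⧸ nn) G) :
    ∃ w ∈ augIdeal S G, pi S nn G w = z := by
  obtain ⟨w, rfl⟩ := pi_surjective S nn G z
  have hw : aug S G w ∈ nn := by
    rw [mem_augIdeal, aug_pi, Ideal.Quotient.eq_zero_iff_mem] at hz
    exact hz
  refine ⟨w - algebraMap S (MonoidAlgebra S G) (aug S G w), ?_, ?_⟩
  · rw [mem_augIdeal, map_sub, aug_algebraMap', sub_self]
  · rw [map_sub, AlgHom.commutes]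
    have : algebraMap S (MonoidAlgebra (S ⧸ nn) G) (aug S G w)
        = MonoidAlgebra.single 1 (algebraMap S (S ⧸ nn) (aug S G w)) := by
      rw [MonoidAlgebra.coe_algebraMap]; rfl
    rw [this, Ideal.Quotient.algebraMap_eq, Ideal.Quotient.eq_zero_iff_mem.2 hw]
    rw [show (MonoidAlgebra.single (1 : G) (0 : S ⧸ nn) : MonoidAlgebra (S ⧸ nn) G) = 0 from
      MonoidAlgebra.single_zero 1, sub_zero]

lemma exists_lift_sq {z : MonoidAlgebra (S ⧸ nn) G} (hz : z ∈ augIdeal (S ⧸ nn) G ^ 2) :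
    ∃ d ∈ augIdeal S G ^ 2, pi S nn G d = z := by
  rw [ideal_sq] at hz
  refine Submodule.mul_induction_on hz (fun m hm n hn => ?_) (fun a b ha hb => ?_)
  · obtain ⟨w1, hw1, rfl⟩ := exists_lift S nn G hm
    obtain ⟨w2, hw2, rfl⟩ := exists_lift S nn G hn
    exact ⟨w1 * w2, by rw [ideal_sq]; exact Ideal.mul_mem_mul hw1 hw2, map_mul _ _ _⟩
  · obtain ⟨d1, hd1, rfl⟩ := ha
    obtain ⟨d2, hd2, rfl⟩ := hb
    exact ⟨d1 + d2, add_mem hd1 hd2, map_add _ _ _⟩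

lemma aug_of (g : G) : aug S G (MonoidAlgebra.of S G g) = 1 := by
  show aug S G (MonoidAlgebra.single g 1) = 1
  rw [aug_single]

lemma of_sub_one_mem (g : G) : MonoidAlgebra.of S G g - 1 ∈ relAugIdeal S nn G := by
  rw [mem_relAug, map_sub, map_one, aug_of, sub_self]
  exact zero_mem nn

lemma augIdeal_le_relAug : augIdeal S G ≤ relAugIdeal S nn G := by
  intro x hx
  rw [mem_augIdeal] at hx
  rw [mem_relAug, hx]
  exact zero_mem nn

lemma ker_pi_mem_sq {m : MonoidAlgebra S G} (hm : ∀ g : G, m.coeff g ∈ nn)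
    (h0 : aug S G m = 0) : m ∈ relAugIdeal S nn G ^ 2 := by
  classical
  have h2 : ∑ g ∈ m.coeff.support, MonoidAlgebra.single g (m.coeff g) = m := MonoidAlgebra.sum_coeff_single m
  have h3 : aug S G m = ∑ g ∈ m.coeff.support, m.coeff g := by
    conv_lhs => rw [← h2]
    rw [map_sum]
    exact Finset.sum_congr rfl fun g _ => aug_single S G g (m.coeff g)
  have key : m = ∑ g ∈ m.coeff.support,
      algebraMap S (MonoidAlgebra S G) (m.coeff g) * (MonoidAlgebra.of S G g - 1) := by
    have h1 : ∀ g : G, algebraMap S (MonoidAlgebra S G) (m.coeff g) * (MonoidAlgebra.of S G g - 1)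
        = MonoidAlgebra.single g (m.coeff g) - algebraMap S (MonoidAlgebra S G) (m.coeff g) := by
      intro g
      rw [mul_sub, mul_one, ← MonoidAlgebra.single_eq_algebraMap_mul_of]
    rw [Finset.sum_congr rfl fun g _ => h1 g, Finset.sum_sub_distrib, ← map_sum, h2, ← h3, h0,
      map_zero, sub_zero]
  rw [key]
  refine Submodule.sum_mem _ fun g _ => ?_
  rw [ideal_sq]
  exact Ideal.mul_mem_mul (algS_mem_relAug S nn G (hm g)) (of_sub_one_mem S nn G g)

-- Lemma B
lemma mem_sq_of_conditions {x : MonoidAlgebra S G}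
    (h1 : aug S G x ∈ nn ^ 2)
    (h2 : pi S nn G x - algebraMap S (MonoidAlgebra (S ⧸ nn) G) (aug S G x)
      ∈ augIdeal (S ⧸ nn) G ^ 2) :
    x ∈ relAugIdeal S nn G ^ 2 := by
  set y := x - algebraMap S (MonoidAlgebra S G) (aug S G x) with hy
  have hpy : pi S nn G y
      = pi S nn G x - algebraMap S (MonoidAlgebra (S ⧸ nn) G) (aug S G x) := by
    rw [hy, map_sub, AlgHom.commutes]
  obtain ⟨d, hd, hdy⟩ := exists_lift_sq S nn G (hpy ▸ h2)
  set m := y - d with hmdef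
  have hm : ∀ g : G, m.coeff g ∈ nn := by
    have hpm : pi S nn G m = 0 := by rw [hmdef, map_sub, hdy, sub_self]
    exact (mem_ker_pi S nn G m).1 hpm
  have haugm : aug S G m = 0 := by
    have hdΔ : aug S G d = 0 :=
      (mem_augIdeal G d).1 (Ideal.pow_le_self two_ne_zero hd)
    rw [hmdef, hy, map_sub, map_sub, aug_algebraMap', sub_self, hdΔ, zero_sub, neg_zero]
  have hmsq := ker_pi_mem_sq S nn G hm haugm
  have hdsq : d ∈ relAugIdeal S nn G ^ 2 :=
    Ideal.pow_right_mono (augIdeal_le_relAug S nn G) 2 hd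
  have hx : x = algebraMap S (MonoidAlgebra S G) (aug S G x) + d + m := by
    rw [hmdef, hy]; abel
  rw [hx]
  exact add_mem (add_mem (algS_mem_sq S nn G h1) hdsq) hmsq

variable (S : Type) [CommRing S] (nn : Ideal S) (G : Type) [Group G]

noncomputable def f1 :
    ↥(Submodule.restrictScalars S (relAugIdeal S nn G)) →ₗ[S]
      ↥(Submodule.restrictScalars S nn) :=
  LinearMap.codRestrict _
    ((aug S G).toLinearMap.comp (Submodule.restrictScalars S (relAugIdeal S nn G)).subtype)
    (fun c => by
      show aug S G c.1 ∈ Submodule.restrictScalars S nn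
      rw [Submodule.restrictScalars_mem]
      exact (mem_relAug S nn G c.1).1 c.2)

noncomputable def f2 :
    ↥(Submodule.restrictScalars S (relAugIdeal S nn G)) →ₗ[S]
      ↥(Submodule.restrictScalars S (augIdeal (S ⧸ nn) G)) :=
  LinearMap.codRestrict _
    ((((pi S nn G).toLinearMap) -
        (Algebra.linearMap S (MonoidAlgebra (S ⧸ nn) G)).comp (aug S G).toLinearMap).comp
      (Submodule.restrictScalars S (relAugIdeal S nn G)).subtype)
    (fun c => by
      show pi S nn G c.1 - algebraMap S (MonoidAlgebra (S ⧸ nn) G) (aug S G c.1)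
        ∈ Submodule.restrictScalars S (augIdeal (S ⧸ nn) G)
      rw [Submodule.restrictScalars_mem, mem_augIdeal, map_sub, aug_pi, aug_algebraMap, sub_self])

lemma f1_apply (c) : (f1 S nn G c : S) = aug S G c.1 := rfl

lemma f2_apply (c) : (f2 S nn G c : MonoidAlgebra (S ⧸ nn) G)
    = pi S nn G c.1 - algebraMap S (MonoidAlgebra (S ⧸ nn) G) (aug S G c.1) := rfl

noncomputable def bigF :
    ↥(Submodule.restrictScalars S (relAugIdeal S nn G)) →ₗ[S]
      (modQuot S nn (nn ^ 2) ×
        modQuot S (augIdeal (S ⧸ nn) G) (augIdeal (S ⧸ nn) G ^ 2)) :=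
  (((Submodule.comap (Submodule.restrictScalars S nn).subtype
        (Submodule.restrictScalars S (nn ^ 2))).mkQ).comp (f1 S nn G)).prod
  (((Submodule.comap (Submodule.restrictScalars S (augIdeal (S ⧸ nn) G)).subtype
        (Submodule.restrictScalars S (augIdeal (S ⧸ nn) G ^ 2))).mkQ).comp (f2 S nn G))

lemma hker :
    Submodule.comap (Submodule.restrictScalars S (relAugIdeal S nn G)).subtype
        (Submodule.restrictScalars S (relAugIdeal S nn G ^ 2))
      ≤ LinearMap.ker (bigF S nn G) := by
  intro c hc
  have hc' : c.1 ∈ relAugIdeal S nn G ^ 2 := hc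
  rw [LinearMap.mem_ker]
  have h1 : f1 S nn G c ∈ Submodule.comap (Submodule.restrictScalars S nn).subtype
      (Submodule.restrictScalars S (nn ^ 2)) := by
    show (f1 S nn G c : S) ∈ nn ^ 2
    rw [f1_apply]
    exact aug_mem_sq S nn G hc'
  have h2 : f2 S nn G c ∈ Submodule.comap
      (Submodule.restrictScalars S (augIdeal (S ⧸ nn) G)).subtype
      (Submodule.restrictScalars S (augIdeal (S ⧸ nn) G ^ 2)) := by
    show (f2 S nn G c : MonoidAlgebra (S ⧸ nn) G) ∈ augIdeal (S ⧸ nn) G ^ 2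
    rw [f2_apply]
    refine sub_mem (pi_mem_sq S nn G hc') (alg_mem_sq S nn G (aug_mem_sq S nn G hc'))
  have : bigF S nn G c = (Submodule.Quotient.mk (f1 S nn G c), Submodule.Quotient.mk (f2 S nn G c)) := rfl
  rw [this, Prod.mk_eq_zero, Submodule.Quotient.mk_eq_zero, Submodule.Quotient.mk_eq_zero]
  exact ⟨h1, h2⟩

noncomputable def lifted :
    modQuot S (relAugIdeal S nn G) (relAugIdeal S nn G ^ 2) →ₗ[S]
      (modQuot S nn (nn ^ 2) ×
        modQuot S (augIdeal (S ⧸ nn) G) (augIdeal (S ⧸ nn) G ^ 2)) :=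
  Submodule.liftQ _ (bigF S nn G) (hker S nn G)

lemma lifted_injective : Function.Injective (lifted S nn G) := by
  rw [← LinearMap.ker_eq_bot]
  apply Submodule.ker_liftQ_eq_bot
  intro c hc
  rw [LinearMap.mem_ker] at hc
  have h1 : Submodule.Quotient.mk (f1 S nn G c) = (0 : modQuot S nn (nn ^ 2)) :=
    congrArg Prod.fst hc
  have h2 : Submodule.Quotient.mk (f2 S nn G c)
      = (0 : modQuot S (augIdeal (S ⧸ nn) G) (augIdeal (S ⧸ nn) G ^ 2)) :=
    congrArg Prod.snd hc
  rw [Submodule.Quotient.mk_eq_zero] at h1 h2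
  have h1' : aug S G c.1 ∈ nn ^ 2 := h1
  have h2' : pi S nn G c.1 - algebraMap S (MonoidAlgebra (S ⧸ nn) G) (aug S G c.1)
      ∈ augIdeal (S ⧸ nn) G ^ 2 := h2
  show c.1 ∈ relAugIdeal S nn G ^ 2
  exact mem_sq_of_conditions S nn G h1' h2'

lemma lifted_surjective : Function.Surjective (lifted S nn G) := by
  rintro ⟨u, v⟩
  obtain ⟨a, rfl⟩ := Submodule.Quotient.mk_surjective _ u
  obtain ⟨z, rfl⟩ := Submodule.Quotient.mk_surjective _ v
  obtain ⟨w, hwΔ, hwz⟩ := exists_lift S nn G (z.2 : (z : MonoidAlgebra (S ⧸ nn) G) ∈ augIdeal (S ⧸ nn) G)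
  have haugw : aug S G w = 0 := (mem_augIdeal G w).1 hwΔ
  have haugx : aug S G (algebraMap S (MonoidAlgebra S G) (a : S) + w) = (a : S) := by
    rw [map_add, aug_algebraMap', haugw, add_zero]
  have hxI : algebraMap S (MonoidAlgebra S G) (a : S) + w ∈ relAugIdeal S nn G := by
    rw [mem_relAug, haugx]; exact a.2
  refine ⟨Submodule.Quotient.mk ⟨algebraMap S (MonoidAlgebra S G) (a : S) + w, hxI⟩, ?_⟩
  have : lifted S nn G (Submodule.Quotient.mk ⟨algebraMap S (MonoidAlgebra S G) (a : S) + w, hxI⟩)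
      = bigF S nn G ⟨algebraMap S (MonoidAlgebra S G) (a : S) + w, hxI⟩ :=
    Submodule.liftQ_apply _ _ _
  rw [this]
  have e1 : f1 S nn G ⟨algebraMap S (MonoidAlgebra S G) (a : S) + w, hxI⟩ = a :=
    Subtype.ext haugx
  have e2 : f2 S nn G ⟨algebraMap S (MonoidAlgebra S G) (a : S) + w, hxI⟩ = z := by
    apply Subtype.ext
    rw [f2_apply]
    show pi S nn G (algebraMap S (MonoidAlgebra S G) (a : S) + w)
        - algebraMap S (MonoidAlgebra (S ⧸ nn) G) (aug S G (algebraMap S (MonoidAlgebra S G) (a : S) + w))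
      = (z : MonoidAlgebra (S ⧸ nn) G)
    rw [haugx, map_add, AlgHom.commutes, hwz, add_sub_cancel_left]
  show (Submodule.Quotient.mk (f1 S nn G _), Submodule.Quotient.mk (f2 S nn G _)) = _
  rw [e1, e2]

end Stmt7Aux

theorem stmt7 (S : Type) [CommRing S] (nn : Ideal S) (G : Type) [Group G] [Finite G] :
    Nonempty (modQuot S (relAugIdeal S nn G) (relAugIdeal S nn G ^ 2) ≃ₗ[S]
      modQuot S nn (nn ^ 2) ×
        modQuot S (augIdeal (S ⧸ nn) G) (augIdeal (S ⧸ nn) G ^ 2)) :=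
  ⟨LinearEquiv.ofBijective (Stmt7Aux.lifted S nn G)
    ⟨Stmt7Aux.lifted_injective S nn G, Stmt7Aux.lifted_surjective S nn G⟩⟩
end
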